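/- Assume the sparsity ansatz. For each B > 0, let L̂_B be a minimizer of CE(L) over the nuclear-norm ball {L ∈ ℝ^{V×m} : ‖L‖_* ≤ B}. Then lim_{B→∞} ‖L̂_B‖_* = +∞, and consequently lim_{B→∞} ‖L̂_B‖_F = +∞. -/

import Mathlib

open Filter Topology Matrix

noncomputable section

/-- Frobenius norm of a real matrix. -/
def frobNorm {a b : ℕ} (A : Matrix (Fin a) (Fin b) ℝ) : ℝ :=
  Real.sqrt (∑ i, ∑ j, (A i j) ^ 2)

/-- Nuclear norm: sum of the singular values of `A`. -/
def nuclearNorm {a b : ℕ} (A : Matrix (Fin a) (Fin b) ℝ) : ℝ :=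
  ∑ i, Real.sqrt ((show (Aᵀ * A).IsHermitian by
    simpa only [Matrix.conjTranspose_eq_transpose_of_trivial] using
      Matrix.isHermitian_conjTranspose_mul_self A).eigenvalues i)

theorem Matrix.isHermitian_transpose_mul_self {a b : ℕ} (A : Matrix (Fin a) (Fin b) ℝ) :
    (Aᵀ * A).IsHermitian := by
  simpa only [Matrix.conjTranspose_eq_transpose_of_trivial] using
    Matrix.isHermitian_conjTranspose_mul_self A

/-- The NTP cross-entropy loss. -/
def CEloss {V m : ℕ} (piv : Fin m → ℝ) (p : Fin m → Fin V → ℝ)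
    (L : Matrix (Fin V) (Fin m) ℝ) : ℝ :=
  - ∑ j, piv j * ∑ z ∈ Finset.univ.filter (fun z => 0 < p j z),
      p j z * Real.log (Real.exp (L z j) / ∑ v, Real.exp (L v j))

section Aux
lemma eig_sum {n : ℕ} {B : Matrix (Fin n) (Fin n) ℝ} (hB : B.IsHermitian) :
    ∑ i, hB.eigenvalues i = B.trace := by
  rw [hB.trace_eq_sum_eigenvalues]
  simp

lemma eig_nonneg {a b : ℕ} (A : Matrix (Fin a) (Fin b) ℝ) (i : Fin b) :
    0 ≤ (Matrix.isHermitian_transpose_mul_self A).eigenvalues i := by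
  have h : (Aᴴ * A).PosSemidef := posSemidef_conjTranspose_mul_self A
  rw [conjTranspose_eq_transpose_of_trivial] at h
  exact h.eigenvalues_nonneg i

lemma eig_sum_eq {a b : ℕ} (A : Matrix (Fin a) (Fin b) ℝ) :
    ∑ i, (Matrix.isHermitian_transpose_mul_self A).eigenvalues i = ∑ i, ∑ j, (A i j) ^ 2 := by
  rw [eig_sum]
  rw [Matrix.trace]
  rw [Finset.sum_comm]
  simp [Matrix.diag, Matrix.mul_apply, pow_two]

lemma frob_le_nuclear {a b : ℕ} (A : Matrix (Fin a) (Fin b) ℝ) :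
    frobNorm A ≤ nuclearNorm A := by
  set lam := (Matrix.isHermitian_transpose_mul_self A).eigenvalues
  have hs : 0 ≤ nuclearNorm A := Finset.sum_nonneg fun i _ => Real.sqrt_nonneg _
  have key : ∑ i, ∑ j, (A i j) ^ 2 ≤ (nuclearNorm A) ^ 2 := by
    rw [← eig_sum_eq A]
    have : ∀ i ∈ Finset.univ, lam i ≤ Real.sqrt (lam i) * nuclearNorm A := by
      intro i _
      have h1 : Real.sqrt (lam i) ≤ nuclearNorm A :=
        Finset.single_le_sum (f := fun i => Real.sqrt (lam i))
          (fun i _ => Real.sqrt_nonneg _) (Finset.mem_univ i)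
      calc lam i = Real.sqrt (lam i) * Real.sqrt (lam i) :=
            (Real.mul_self_sqrt (eig_nonneg A i)).symm
        _ ≤ Real.sqrt (lam i) * nuclearNorm A := by
            exact mul_le_mul_of_nonneg_left h1 (Real.sqrt_nonneg _)
    calc ∑ i, lam i ≤ ∑ i, Real.sqrt (lam i) * nuclearNorm A := Finset.sum_le_sum this
      _ = (nuclearNorm A) ^ 2 := by rw [← Finset.sum_mul, pow_two]; rfl
  calc frobNorm A ≤ Real.sqrt ((nuclearNorm A) ^ 2) := Real.sqrt_le_sqrt key
    _ = nuclearNorm A := Real.sqrt_sq hs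

lemma nuclear_le_frob {a b : ℕ} (A : Matrix (Fin a) (Fin b) ℝ) :
    nuclearNorm A ≤ b * frobNorm A := by
  have h : ∀ i ∈ Finset.univ, Real.sqrt ((Matrix.isHermitian_transpose_mul_self A).eigenvalues i)
      ≤ frobNorm A := by
    intro i _
    unfold frobNorm
    apply Real.sqrt_le_sqrt
    rw [← eig_sum_eq A]
    exact Finset.single_le_sum (fun j _ => eig_nonneg A j) (Finset.mem_univ i)
  calc nuclearNorm A ≤ ∑ _i : Fin b, frobNorm A := Finset.sum_le_sum h
    _ = b * frobNorm A := by rw [Finset.sum_const]; simp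

lemma entry_le_frob {a b : ℕ} (A : Matrix (Fin a) (Fin b) ℝ) (i : Fin a) (j : Fin b) :
    |A i j| ≤ frobNorm A := by
  rw [← Real.sqrt_sq_eq_abs]
  apply Real.sqrt_le_sqrt
  calc (A i j)^2 ≤ ∑ j', (A i j')^2 :=
        Finset.single_le_sum (f := fun j' => (A i j')^2) (fun j' _ => sq_nonneg _) (Finset.mem_univ j)
    _ ≤ ∑ i', ∑ j', (A i' j')^2 :=
        Finset.single_le_sum (f := fun i' => ∑ j', (A i' j')^2)
          (fun i' _ => Finset.sum_nonneg fun _ _ => sq_nonneg _) (Finset.mem_univ i)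

section Helpers

variable {V m : ℕ} (piv : Fin m → ℝ) (p : Fin m → Fin V → ℝ)

def Hent : ℝ :=
  - ∑ j, piv j * ∑ z ∈ Finset.univ.filter (fun z => 0 < p j z), p j z * Real.log (p j z)

variable {piv p}

lemma Dpos (hV : 0 < V) (L : Matrix (Fin V) (Fin m) ℝ) (j : Fin m) :
    0 < ∑ v, Real.exp (L v j) :=
  Finset.sum_pos (fun v _ => Real.exp_pos _) ⟨⟨0, hV⟩, Finset.mem_univ _⟩

lemma hsupp (hp : ∀ j z, 0 ≤ p j z) (hpsum : ∀ j, ∑ z, p j z = 1) (j : Fin m) :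
    ∑ z ∈ Finset.univ.filter (fun z => 0 < p j z), p j z = 1 := by
  rw [Finset.sum_filter_of_ne (fun z _ hz => lt_of_le_of_ne (hp j z) (Ne.symm hz)), hpsum j]

lemma CE_sub_H (hV : 0 < V) (L : Matrix (Fin V) (Fin m) ℝ) :
    CEloss piv p L - Hent piv p =
      ∑ j, piv j * ∑ z ∈ Finset.univ.filter (fun z => 0 < p j z),
        p j z * (Real.log (p j z) - Real.log (Real.exp (L z j) / ∑ v, Real.exp (L v j))) := by
  unfold CEloss Hent
  simp only [mul_sub, Finset.sum_sub_distrib, Finset.mul_sum]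
  ring

lemma gibbs (hV : 0 < V) (hpiv : ∀ j, 0 < piv j)
    (hp : ∀ j z, 0 ≤ p j z) (hpsum : ∀ j, ∑ z, p j z = 1)
    {j0 : Fin m} {v0 : Fin V} (hv0 : p j0 v0 = 0) (L : Matrix (Fin V) (Fin m) ℝ) :
    Hent piv p < CEloss piv p L := by
  have hD : ∀ j : Fin m, 0 < ∑ v, Real.exp (L v j) := Dpos hV L
  have hqpos : ∀ (j : Fin m) (z : Fin V), 0 < Real.exp (L z j) / ∑ v, Real.exp (L v j) :=
    fun j z => div_pos (Real.exp_pos _) (hD j)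
  have hqsum : ∀ j, ∑ z, Real.exp (L z j) / ∑ v, Real.exp (L v j) = 1 := by
    intro j; rw [← Finset.sum_div, div_self (ne_of_gt (hD j))]
  set S : Fin m → Finset (Fin V) := fun j => Finset.univ.filter (fun z => 0 < p j z) with hS
  have key : ∀ j, 1 - (∑ z ∈ S j, Real.exp (L z j) / ∑ v, Real.exp (L v j)) ≤
      ∑ z ∈ S j, p j z * (Real.log (p j z) -
        Real.log (Real.exp (L z j) / ∑ v, Real.exp (L v j))) := by
    intro j
    have h1 : ∀ z ∈ S j, p j z - Real.exp (L z j) / ∑ v, Real.exp (L v j) ≤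
        p j z * (Real.log (p j z) -
          Real.log (Real.exp (L z j) / ∑ v, Real.exp (L v j))) := by
      intro z hz
      have hpz : 0 < p j z := (Finset.mem_filter.mp hz).2
      set q := Real.exp (L z j) / ∑ v, Real.exp (L v j) with hqdef
      have hq : 0 < q := hqpos j z
      have hlog := Real.log_le_sub_one_of_pos (div_pos hq hpz)
      rw [Real.log_div (ne_of_gt hq) (ne_of_gt hpz)] at hlog
      have h2 := mul_le_mul_of_nonneg_left hlog (le_of_lt hpz)
      have h3 : p j z * (q / p j z - 1) = q - p j z := by field_simp
      nlinarith
    calc 1 - (∑ z ∈ S j, Real.exp (L z j) / ∑ v, Real.exp (L v j))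
        = ∑ z ∈ S j, (p j z - Real.exp (L z j) / ∑ v, Real.exp (L v j)) := by
          rw [Finset.sum_sub_distrib, hsupp hp hpsum j]
      _ ≤ _ := Finset.sum_le_sum h1
  have hSle : ∀ j, ∑ z ∈ S j, Real.exp (L z j) / ∑ v, Real.exp (L v j) ≤ 1 := by
    intro j
    rw [← hqsum j]
    exact Finset.sum_le_sum_of_subset_of_nonneg (Finset.filter_subset _ _)
      (fun z _ _ => le_of_lt (hqpos j z))
  have hj0 : ∑ z ∈ S j0, Real.exp (L z j0) / ∑ v, Real.exp (L v j0) ≤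
      1 - Real.exp (L v0 j0) / ∑ v, Real.exp (L v j0) := by
    have hv0S : v0 ∉ S j0 := by simp [hS, hv0]
    have h4 : ∑ z ∈ insert v0 (S j0), Real.exp (L z j0) / ∑ v, Real.exp (L v j0) ≤
        ∑ z, Real.exp (L z j0) / ∑ v, Real.exp (L v j0) :=
      Finset.sum_le_sum_of_subset_of_nonneg (Finset.subset_univ _)
        (fun z _ _ => le_of_lt (hqpos j0 z))
    rw [Finset.sum_insert hv0S, hqsum j0] at h4
    linarith
  have hdiff : 0 < CEloss piv p L - Hent piv p := by
    rw [CE_sub_H hV L]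
    apply Finset.sum_pos'
    · intro j _
      exact mul_nonneg (le_of_lt (hpiv j)) (le_trans (by linarith [hSle j]) (key j))
    · refine ⟨j0, Finset.mem_univ _, mul_pos (hpiv j0) ?_⟩
      exact lt_of_lt_of_le (by linarith [hqpos j0 v0, hj0]) (key j0)
  linarith

lemma construct (hV : 0 < V) (hpiv : ∀ j, 0 < piv j) (hpisum : ∑ j, piv j = 1)
    (hp : ∀ j z, 0 ≤ p j z) (hpsum : ∀ j, ∑ z, p j z = 1) (t : ℝ) :
    CEloss piv p (Matrix.of fun z j => if 0 < p j z then Real.log (p j z) + t else 0)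
      ≤ Hent piv p + V * Real.exp (-t) := by
  set L : Matrix (Fin V) (Fin m) ℝ :=
    Matrix.of fun z j => if 0 < p j z then Real.log (p j z) + t else 0 with hL
  set c : Fin m → ℝ := fun j => ((Finset.univ.filter (fun z => ¬ 0 < p j z)).card : ℝ) with hc
  have hcnn : ∀ j, 0 ≤ c j := fun j => Nat.cast_nonneg _
  have hcle : ∀ j, c j ≤ V := by
    intro j
    have := Finset.card_filter_le Finset.univ (fun z => ¬ 0 < p j z)
    simp only [hc]
    exact_mod_cast le_trans this (by simp)
  have hDval : ∀ j, ∑ v, Real.exp (L v j) = Real.exp t + c j := by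
    intro j
    rw [← Finset.sum_filter_add_sum_filter_not Finset.univ (fun z => 0 < p j z)]
    congr 1
    · have : ∀ z ∈ Finset.univ.filter (fun z => 0 < p j z),
          Real.exp (L z j) = p j z * Real.exp t := by
        intro z hz
        have hpz : 0 < p j z := (Finset.mem_filter.mp hz).2
        simp only [hL, Matrix.of_apply, if_pos hpz]
        rw [Real.exp_add, Real.exp_log hpz]
      rw [Finset.sum_congr rfl this, ← Finset.sum_mul, hsupp hp hpsum j, one_mul]
    · have : ∀ z ∈ Finset.univ.filter (fun z => ¬ 0 < p j z), Real.exp (L z j) = 1 := by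
        intro z hz
        have hpz : ¬ 0 < p j z := (Finset.mem_filter.mp hz).2
        simp [hL, Matrix.of_apply, if_neg hpz]
      rw [Finset.sum_congr rfl this, Finset.sum_const, hc]
      simp
  have hDpos : ∀ j, 0 < Real.exp t + c j := fun j =>
    add_pos_of_pos_of_nonneg (Real.exp_pos t) (hcnn j)
  have hbound : ∀ j, Real.log (Real.exp t + c j) - t ≤ V * Real.exp (-t) := by
    intro j
    have hx : 0 < 1 + c j * Real.exp (-t) :=
      add_pos_of_pos_of_nonneg one_pos (mul_nonneg (hcnn j) (le_of_lt (Real.exp_pos _)))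
    have hsplit : Real.exp t + c j = Real.exp t * (1 + c j * Real.exp (-t)) := by
      rw [mul_add, mul_one, Real.exp_neg]
      field_simp
    rw [hsplit, Real.log_mul (ne_of_gt (Real.exp_pos t)) (ne_of_gt hx), Real.log_exp]
    have := Real.log_le_sub_one_of_pos hx
    have hce : c j * Real.exp (-t) ≤ V * Real.exp (-t) :=
      mul_le_mul_of_nonneg_right (hcle j) (le_of_lt (Real.exp_pos _))
    linarith
  have hdiff : CEloss piv p L - Hent piv p = ∑ j, piv j * (Real.log (Real.exp t + c j) - t) := by
    rw [CE_sub_H hV L]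
    apply Finset.sum_congr rfl
    intro j _
    congr 1
    have : ∀ z ∈ Finset.univ.filter (fun z => 0 < p j z),
        p j z * (Real.log (p j z) - Real.log (Real.exp (L z j) / ∑ v, Real.exp (L v j)))
          = p j z * (Real.log (Real.exp t + c j) - t) := by
      intro z hz
      have hpz : 0 < p j z := (Finset.mem_filter.mp hz).2
      rw [hDval j, Real.log_div (Real.exp_ne_zero _) (ne_of_gt (hDpos j)), Real.log_exp]
      have : L z j = Real.log (p j z) + t := by simp [hL, Matrix.of_apply, if_pos hpz]
      rw [this]
      ring
    rw [Finset.sum_congr rfl this, ← Finset.sum_mul, hsupp hp hpsum j, one_mul]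
  have : ∑ j, piv j * (Real.log (Real.exp t + c j) - t) ≤ V * Real.exp (-t) := by
    calc ∑ j, piv j * (Real.log (Real.exp t + c j) - t)
        ≤ ∑ j, piv j * (V * Real.exp (-t)) :=
          Finset.sum_le_sum fun j _ =>
            mul_le_mul_of_nonneg_left (hbound j) (le_of_lt (hpiv j))
      _ = V * Real.exp (-t) := by rw [← Finset.sum_mul, hpisum, one_mul]
  linarith

lemma CE_continuous (hV : 0 < V) : Continuous (CEloss piv p) := by
  unfold CEloss
  refine Continuous.neg (continuous_finset_sum _ fun j _ => Continuous.mul continuous_const ?_)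
  refine continuous_finset_sum _ fun z _ => Continuous.mul continuous_const ?_
  have hlog : ∀ L : Matrix (Fin V) (Fin m) ℝ,
      Real.log (Real.exp (L z j) / ∑ v, Real.exp (L v j))
        = L z j - Real.log (∑ v, Real.exp (L v j)) := by
    intro L
    rw [Real.log_div (Real.exp_ne_zero _) (ne_of_gt (Dpos hV L j)), Real.log_exp]
  simp only [hlog]
  refine Continuous.sub (continuous_apply_apply z j) (Continuous.log ?_ fun L => ?_)
  · exact continuous_finset_sum _ fun v _ => (continuous_apply_apply v j).rexp
  · exact ne_of_gt (Dpos hV L j)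

end Helpers
end Aux

/-- under the sparsity ansatz, minimizers of `CE` over nuclear-norm balls of
radius `B` diverge in nuclear (hence Frobenius) norm as `B → ∞`. -/
theorem stmt_15 (V m : ℕ) (hV : 2 ≤ V) (hm : 0 < m)
    (piv : Fin m → ℝ) (hpiv : ∀ j, 0 < piv j) (hpisum : ∑ j, piv j = 1)
    (p : Fin m → Fin V → ℝ) (hp : ∀ j z, 0 ≤ p j z) (hpsum : ∀ j, ∑ z, p j z = 1)
    (hsparse : ∃ j, ∃ v, ¬ 0 < p j v)
    (Lhat : ℝ → Matrix (Fin V) (Fin m) ℝ)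
    (hmin : ∀ B : ℝ, 0 < B → nuclearNorm (Lhat B) ≤ B ∧
        ∀ L : Matrix (Fin V) (Fin m) ℝ, nuclearNorm L ≤ B →
          CEloss piv p (Lhat B) ≤ CEloss piv p L) :
    Tendsto (fun B => nuclearNorm (Lhat B)) atTop atTop ∧
    Tendsto (fun B => frobNorm (Lhat B)) atTop atTop := by
  obtain ⟨j0, v0, hv0'⟩ := hsparse
  have hv0 : p j0 v0 = 0 := le_antisymm (le_of_not_gt hv0') (hp j0 v0)
  have hVpos : 0 < V := lt_of_lt_of_le two_pos hV
  have h1 : Tendsto (fun B => nuclearNorm (Lhat B)) atTop atTop := by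
    rw [tendsto_atTop]
    intro R
    set R' : ℝ := |R| + 1 with hR'
    have hR'0 : 0 ≤ R' := by positivity
    set K : Set (Matrix (Fin V) (Fin m) ℝ) := {L | ∀ i j, L i j ∈ Set.Icc (-R') R'} with hK
    have hKc : IsCompact K := by
      have hKeq : K = Set.univ.pi (fun _ : Fin V => Set.univ.pi fun _ : Fin m =>
          Set.Icc (-R') R') := by
        ext L
        exact ⟨fun h i _ j _ => h i j, fun h i j => h i trivial j trivial⟩
      rw [hKeq]
      exact isCompact_univ_pi fun i => isCompact_univ_pi fun j => isCompact_Icc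
    have hKne : K.Nonempty := ⟨0, fun i j => Set.mem_Icc.mpr ⟨by simpa using neg_nonpos.mpr hR'0,
      by simpa using hR'0⟩⟩
    obtain ⟨Lstar, hLstarK, hLstarmin⟩ :=
      hKc.exists_isMinOn hKne (CE_continuous hVpos).continuousOn
    have hgap : Hent piv p < CEloss piv p Lstar := gibbs hVpos hpiv hp hpsum hv0 Lstar
    have htend : Tendsto (fun t : ℝ => (V:ℝ) * Real.exp (-t)) atTop (nhds 0) := by
      have h := (Real.tendsto_exp_atBot.comp tendsto_neg_atTop_atBot).const_mul (V:ℝ)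
      simpa using h
    obtain ⟨t, ht⟩ := (htend.eventually_lt_const
      (show (0:ℝ) < CEloss piv p Lstar - Hent piv p by linarith)).exists
    set L0 : Matrix (Fin V) (Fin m) ℝ :=
      Matrix.of fun z j => if 0 < p j z then Real.log (p j z) + t else 0 with hL0def
    have hL0 : CEloss piv p L0 < CEloss piv p Lstar := by
      have hcon := construct hVpos hpiv hpisum hp hpsum t
      rw [← hL0def] at hcon
      linarith
    filter_upwards [eventually_ge_atTop (max 1 (m * frobNorm L0))] with B hB
    have hB1 : (1:ℝ) ≤ B := le_trans (le_max_left _ _) hB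
    have hBpos : 0 < B := lt_of_lt_of_le one_pos hB1
    obtain ⟨hfeas, hopt⟩ := hmin B hBpos
    have hL0feas : nuclearNorm L0 ≤ B :=
      le_trans (nuclear_le_frob L0) (le_trans (le_max_right _ _) hB)
    have hCEB : CEloss piv p (Lhat B) < CEloss piv p Lstar :=
      lt_of_le_of_lt (hopt L0 hL0feas) hL0
    by_contra hcontra
    push_neg at hcontra
    have hRR' : R ≤ R' := le_trans (le_abs_self R) (by linarith)
    have h5 : frobNorm (Lhat B) ≤ R' :=
      le_trans (frob_le_nuclear _) (le_trans (le_of_lt hcontra) hRR')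
    have hmem : Lhat B ∈ K := fun i j =>
      Set.mem_Icc.mpr (abs_le.mp (le_trans (entry_le_frob _ i j) h5))
    exact absurd (isMinOn_iff.mp hLstarmin _ hmem) (not_le.mpr hCEB)
  refine ⟨h1, ?_⟩
  have hm' : (0:ℝ) < m := by exact_mod_cast hm
  have h2 : Tendsto (fun B => nuclearNorm (Lhat B) / m) atTop atTop := h1.atTop_div_const hm'
  apply tendsto_atTop_mono _ h2
  intro B
  rw [div_le_iff₀ hm']
  linarith [nuclear_le_frob (Lhat B)]
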